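/- Let π be an arbitrary permutation of (1, …, n), let M_π = ∏_{i∈π} G_i with each G_i a G-matrix of size (n+1)×(n+1), and let A, B, C, D be arbitrary diagonal (n+1)×(n+1) complex matrices. Then the polynomial λ ↦ det((A·M_π + C) − λ·(B·M_π + D)) does not depend on the permutation π; in particular, the generalized eigenvalues of the pencil (A·M_π + C, B·M_π + D) do not depend on π, and if B·M_π + D is invertible, the eigenvalues of the RAMPD matrix R = (A·M_π + C)·(B·M_π + D)^{−1} do not depend on π. -/

import Mathlib

noncomputable section

open Matrix

/-- A G-matrix of size (n+1)×(n+1) with block index k (0-based rows/columns k, k+1):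
it equals the identity matrix outside of the 2×2 submatrix in rows and columns k, k+1. -/
def IsGMat {n : ℕ} (k : Fin n) (G : Matrix (Fin (n + 1)) (Fin (n + 1)) ℂ) : Prop :=
  ∀ i j : Fin (n + 1),
    ¬((i = k.castSucc ∨ i = k.succ) ∧ (j = k.castSucc ∨ j = k.succ)) →
    G i j = if i = j then 1 else 0

/-- M_π = G_{π(1)}·G_{π(2)}·⋯·G_{π(n)}, the product taken from left to right in the
order prescribed by the permutation π. -/
def Mperm {n : ℕ} (G : Fin n → Matrix (Fin (n + 1)) (Fin (n + 1)) ℂ)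
    (π : Equiv.Perm (Fin n)) : Matrix (Fin (n + 1)) (Fin (n + 1)) ℂ :=
  (List.ofFn (fun i : Fin n => G (π i))).prod

/-- the n×(n+1) projection matrix P = [I_n 0] deleting the last coordinate -/
def Pproj (n : ℕ) : Matrix (Fin n) (Fin (n + 1)) ℂ :=
  Matrix.of fun i j => if (j : ℕ) = (i : ℕ) then 1 else 0

namespace Stmt19Aux

def SuppIn {m : ℕ} (p : ℕ → Prop) (M : Matrix (Fin m) (Fin m) ℂ) : Prop :=
  ∀ i j : Fin m, ¬(p i ∧ p j) → M i j = if i = j then 1 else 0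

lemma suppIn_one {m : ℕ} (p : ℕ → Prop) : SuppIn p (1 : Matrix (Fin m) (Fin m) ℂ) := by
  intro i j _; simp [Matrix.one_apply]

lemma SuppIn.mono {m : ℕ} {p q : ℕ → Prop} (h : ∀ x, p x → q x) {M : Matrix (Fin m) (Fin m) ℂ}
    (hM : SuppIn p M) : SuppIn q M :=
  fun i j hij => hM i j (fun hp => hij ⟨h _ hp.1, h _ hp.2⟩)

lemma SuppIn.mul {m : ℕ} {p : ℕ → Prop} {M N : Matrix (Fin m) (Fin m) ℂ}
    (hM : SuppIn p M) (hN : SuppIn p N) : SuppIn p (M * N) := by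
  intro i j hij
  rcases not_and_or.mp hij with hi | hj
  · have hrow : ∀ l, M i l = if i = l then 1 else 0 := fun l => hM i l (fun hp => hi hp.1)
    have : (M * N) i j = N i j := by
      rw [Matrix.mul_apply]
      calc ∑ l, M i l * N l j = ∑ l, if i = l then N l j else 0 := by
            refine Finset.sum_congr rfl fun l _ => ?_
            rw [hrow l]; split <;> simp
        _ = N i j := by rw [Finset.sum_ite_eq]; simp
    rw [this]
    exact hN i j hij
  · have hcol : ∀ l, N l j = if l = j then 1 else 0 := fun l => hN l j (fun hp => hj hp.2)
    have : (M * N) i j = M i j := by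
      rw [Matrix.mul_apply]
      calc ∑ l, M i l * N l j = ∑ l, if l = j then M i l else 0 := by
            refine Finset.sum_congr rfl fun l _ => ?_
            rw [hcol l]; split <;> simp
        _ = M i j := by rw [Finset.sum_ite_eq']; simp
    rw [this]
    exact hM i j hij

lemma SuppIn.commute {m : ℕ} {p q : ℕ → Prop} (hpq : ∀ x : ℕ, ¬(p x ∧ q x))
    {M N : Matrix (Fin m) (Fin m) ℂ} (hM : SuppIn p M) (hN : SuppIn q N) : M * N = N * M := by
  have h1 : (M - 1) * (N - 1) = 0 := by
    ext i j
    rw [Matrix.mul_apply]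
    apply Finset.sum_eq_zero
    intro l _
    rcases not_and_or.mp (hpq l) with h | h
    · have : M i l = (1 : Matrix (Fin m) (Fin m) ℂ) i l := by
        rw [hM i l (fun hp => h hp.2), Matrix.one_apply]
      simp [Matrix.sub_apply, this]
    · have : N l j = (1 : Matrix (Fin m) (Fin m) ℂ) l j := by
        rw [hN l j (fun hp => h hp.1), Matrix.one_apply]
      simp [Matrix.sub_apply, this]
  have h2 : (N - 1) * (M - 1) = 0 := by
    ext i j
    rw [Matrix.mul_apply]
    apply Finset.sum_eq_zero
    intro l _
    rcases not_and_or.mp (hpq l) with h | h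
    · have : M l j = (1 : Matrix (Fin m) (Fin m) ℂ) l j := by
        rw [hM l j (fun hp => h hp.1), Matrix.one_apply]
      simp [Matrix.sub_apply, this]
    · have : N i l = (1 : Matrix (Fin m) (Fin m) ℂ) i l := by
        rw [hN i l (fun hp => h hp.2), Matrix.one_apply]
      simp [Matrix.sub_apply, this]
  have e1 : M * N = (M - 1) * (N - 1) + M + N - 1 := by noncomm_ring
  have e2 : N * M = (N - 1) * (M - 1) + M + N - 1 := by noncomm_ring
  rw [e1, e2, h1, h2]


/-- the diagonal sandwich `diag e * M * diag d + diag f` -/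
def SW {m : ℕ} (e d f : Fin m → ℂ) (M : Matrix (Fin m) (Fin m) ℂ) :
    Matrix (Fin m) (Fin m) ℂ :=
  Matrix.diagonal e * M * Matrix.diagonal d + Matrix.diagonal f

lemma SW_apply {m : ℕ} (e d f : Fin m → ℂ) (M : Matrix (Fin m) (Fin m) ℂ) (i j : Fin m) :
    SW e d f M i j = e i * M i j * d j + if i = j then f i else 0 := by
  simp [SW, Matrix.add_apply, Matrix.mul_diagonal, Matrix.diagonal_mul, Matrix.diagonal_apply]

lemma sum_two {ι : Type*} [Fintype ι] [DecidableEq ι] (f : ι → ℂ) (c l : ι) (hcl : c ≠ l)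
    (h : ∀ x, x ≠ c → x ≠ l → f x = 0) : ∑ x, f x = f c + f l := by
  have := Finset.sum_subset (Finset.subset_univ ({c, l} : Finset ι)) (by
    intro x _ hx
    simp only [Finset.mem_insert, Finset.mem_singleton, not_or] at hx
    exact h x hx.1 hx.2)
  rw [← this, Finset.sum_pair hcl]

/-- core single-step Laplace expansion: `N` supported in the first `n+1` coordinates,
`g` a G-matrix in the last two coordinates. -/
lemma B1 {n : ℕ} (N g : Matrix (Fin (n+2)) (Fin (n+2)) ℂ)
    (hN : SuppIn (fun x => x < n+1) N)
    (hg : SuppIn (fun x => x = n ∨ x = n+1) g)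
    (e d f : Fin (n+2) → ℂ) :
    (SW e d f (N * g)).det =
      (e (Fin.last (n+1)) * g (Fin.last (n+1)) (Fin.last (n+1)) * d (Fin.last (n+1))
          + f (Fin.last (n+1))) *
        (SW (e ∘ Fin.castSucc)
            (Function.update (d ∘ Fin.castSucc) (Fin.last n)
              (g (Fin.castSucc (Fin.last n)) (Fin.castSucc (Fin.last n))
                * d (Fin.castSucc (Fin.last n))))
            (f ∘ Fin.castSucc)
            (N.submatrix Fin.castSucc Fin.castSucc)).det
      - e (Fin.last (n+1)) * g (Fin.last (n+1)) (Fin.castSucc (Fin.last n))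
          * d (Fin.castSucc (Fin.last n)) *
        (SW (e ∘ Fin.castSucc)
            (Function.update (d ∘ Fin.castSucc) (Fin.last n)
              (g (Fin.castSucc (Fin.last n)) (Fin.last (n+1)) * d (Fin.last (n+1))))
            (Function.update (f ∘ Fin.castSucc) (Fin.last n) 0)
            (N.submatrix Fin.castSucc Fin.castSucc)).det := by
  set l : Fin (n+2) := Fin.last (n+1) with hl
  set c : Fin (n+2) := Fin.castSucc (Fin.last n) with hc
  have hcval : (c : ℕ) = n := by simp [hc]
  have hlval : (l : ℕ) = n + 1 := by simp [hl]
  have hcl : c ≠ l := by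
    intro h; rw [Fin.ext_iff, hcval, hlval] at h; omega
  -- last row of N is trivial
  have hNrow : ∀ t, N l t = if l = t then 1 else 0 := by
    intro t
    exact hN l t (fun hp => by rw [hlval] at hp; omega)
  -- last row of N*g equals last row of g
  have hNg : ∀ j, (N * g) l j = g l j := by
    intro j
    rw [Matrix.mul_apply]
    calc ∑ t, N l t * g t j = ∑ t, if l = t then g t j else 0 := by
          refine Finset.sum_congr rfl fun t _ => ?_
          rw [hNrow t]; split <;> simp
      _ = g l j := by rw [Finset.sum_ite_eq]; simp
  -- column j of g trivial when j ∉ {c, l}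
  have hcol_triv : ∀ (i j : Fin (n+2)), (j : ℕ) ≠ n → (j : ℕ) ≠ n + 1 → (N * g) i j = N i j := by
    intro i j h1 h2
    rw [Matrix.mul_apply]
    calc ∑ t, N i t * g t j = ∑ t, if t = j then N i t else 0 := by
          refine Finset.sum_congr rfl fun t _ => ?_
          rw [hg t j (fun hp => by rcases hp.2 with h | h <;> omega)]
          split <;> simp
      _ = N i j := by rw [Finset.sum_ite_eq']; simp
  have hNil : ∀ i : Fin (n+2), (i : ℕ) < n + 1 → N i l = 0 := by
    intro i hi
    rw [hN i l (fun hp => by rw [hlval] at hp; omega)]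
    rw [if_neg (by intro h; rw [h, hlval] at hi; omega)]
  have hcol_c : ∀ i : Fin (n+2), (i : ℕ) < n + 1 → (N * g) i c = N i c * g c c := by
    intro i hi
    rw [Matrix.mul_apply]
    rw [sum_two _ c l hcl (by
      intro t htc htl
      rw [hg t c (fun hp => by
        rcases hp.1 with h | h
        · exact htc (by rw [Fin.ext_iff, hcval]; exact h)
        · exact htl (by rw [Fin.ext_iff, hlval]; exact h))]
      rw [if_neg htc, mul_zero])]
    rw [hNil i hi, zero_mul, add_zero]
  have hcol_l : ∀ i : Fin (n+2), (i : ℕ) < n + 1 → (N * g) i l = N i c * g c l := by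
    intro i hi
    rw [Matrix.mul_apply]
    rw [sum_two _ c l hcl (by
      intro t htc htl
      rw [hg t l (fun hp => by
        rcases hp.1 with h | h
        · exact htc (by rw [Fin.ext_iff, hcval]; exact h)
        · exact htl (by rw [Fin.ext_iff, hlval]; exact h))]
      rw [if_neg htl, mul_zero])]
    rw [hNil i hi, zero_mul, add_zero]
  -- the expansion
  rw [Matrix.det_succ_row _ l]
  rw [sum_two _ c l hcl (by
    intro j hjc hjl
    have hZ : SW e d f (N * g) l j = 0 := by
      rw [SW_apply, hNg j]
      rw [hg l j (fun hp => by
        rcases hp.2 with h | h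
        · exact hjc (by rw [Fin.ext_iff, hcval]; exact h)
        · exact hjl (by rw [Fin.ext_iff, hlval]; exact h))]
      rw [if_neg (fun h => hjl h.symm), if_neg (fun h => hjl h.symm)]
      ring
    rw [hZ]; ring)]
  -- signs
  have hsign_l : (-1 : ℂ) ^ ((l : ℕ) + (l : ℕ)) = 1 := Even.neg_one_pow ⟨(l : ℕ), rfl⟩
  have hsign_c : (-1 : ℂ) ^ ((l : ℕ) + (c : ℕ)) = -1 := by
    refine Odd.neg_one_pow ⟨n, ?_⟩
    rw [hlval, hcval]; ring
  -- entries in last row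
  have hZll : SW e d f (N * g) l l = e l * g l l * d l + f l := by
    rw [SW_apply, hNg, if_pos rfl]
  have hZlc : SW e d f (N * g) l c = e l * g l c * d c := by
    rw [SW_apply, hNg, if_neg (fun h => hcl h.symm), add_zero]
  -- minors
  have hsa : l.succAbove = Fin.castSucc := Fin.succAbove_last
  have minor_l : (SW e d f (N * g)).submatrix l.succAbove l.succAbove =
      SW (e ∘ Fin.castSucc)
        (Function.update (d ∘ Fin.castSucc) (Fin.last n) (g c c * d c))
        (f ∘ Fin.castSucc) (N.submatrix Fin.castSucc Fin.castSucc) := by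
    ext i j
    rw [hsa, Matrix.submatrix_apply, SW_apply, SW_apply, Matrix.submatrix_apply]
    by_cases hj : j = Fin.last n
    · subst hj
      rw [Function.update_self]
      rw [hcol_c _ (by rw [Fin.coe_castSucc]; omega)]
      simp only [Function.comp_apply]
      by_cases hi : i = Fin.last n
      · rw [if_pos (show Fin.castSucc i = c by rw [hi]), if_pos hi]; ring
      · rw [if_neg (show ¬ Fin.castSucc i = c from fun h => hi (Fin.castSucc_inj.mp h)),
          if_neg hi]
        ring
    · have hjv : (j : ℕ) ≠ n := fun h => hj (by rw [Fin.ext_iff]; simpa using h)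
      rw [Function.update_of_ne hj]
      rw [hcol_triv _ _ (by rw [Fin.coe_castSucc]; exact hjv)
        (by rw [Fin.coe_castSucc]; omega)]
      simp only [Function.comp_apply]
      by_cases hij : i = j
      · rw [if_pos (by rw [hij]), if_pos hij]
      · rw [if_neg (fun h => hij (Fin.castSucc_inj.mp h)), if_neg hij]
  have minor_c : (SW e d f (N * g)).submatrix l.succAbove c.succAbove =
      SW (e ∘ Fin.castSucc)
        (Function.update (d ∘ Fin.castSucc) (Fin.last n) (g c l * d l))
        (Function.update (f ∘ Fin.castSucc) (Fin.last n) 0)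
        (N.submatrix Fin.castSucc Fin.castSucc) := by
    ext i j
    rw [hsa, Matrix.submatrix_apply, SW_apply, SW_apply, Matrix.submatrix_apply]
    by_cases hj : j = Fin.last n
    · subst hj
      have hcsa : c.succAbove (Fin.last n) = l := by
        rw [hc, Fin.succAbove_castSucc_of_le _ _ le_rfl, Fin.succ_last]
      rw [hcsa, Function.update_self]
      rw [hcol_l _ (by rw [Fin.coe_castSucc]; omega)]
      rw [if_neg (Fin.castSucc_lt_last i).ne]
      by_cases hi : i = Fin.last n
      · rw [if_pos hi, hi, Function.update_self]
        simp only [Function.comp_apply]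
        ring
      · rw [if_neg hi]
        simp only [Function.comp_apply]
        ring
    · have hjlt : j < Fin.last n := lt_of_le_of_ne (Fin.le_last j) hj
      have hcsa : c.succAbove j = Fin.castSucc j := by
        rw [hc, Fin.succAbove_castSucc_of_lt _ _ hjlt]
      rw [hcsa]
      have hjv : (j : ℕ) ≠ n := fun h => hj (by rw [Fin.ext_iff]; simpa using h)
      rw [Function.update_of_ne hj]
      rw [hcol_triv _ _ (by rw [Fin.coe_castSucc]; exact hjv)
        (by rw [Fin.coe_castSucc]; omega)]
      simp only [Function.comp_apply]
      by_cases hij : i = j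
      · rw [if_pos (by rw [hij]), if_pos hij, Function.update_of_ne (by rw [hij]; exact hj)]
        simp only [Function.comp_apply]
      · rw [if_neg (fun h => hij (Fin.castSucc_inj.mp h)), if_neg hij]
  rw [minor_l, minor_c, hZll, hZlc, hsign_l, hsign_c]
  ring

lemma det_triv_last {n : ℕ} (M : Matrix (Fin (n+1)) (Fin (n+1)) ℂ)
    (h : ∀ j, M (Fin.last n) j = if j = Fin.last n then 1 else 0) :
    M.det = (M.submatrix Fin.castSucc Fin.castSucc).det := by
  rw [Matrix.det_succ_row _ (Fin.last n)]
  rw [Finset.sum_eq_single (Fin.last n)]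
  · rw [h, if_pos rfl, Fin.succAbove_last]
    have hev : (-1 : ℂ) ^ ((Fin.last n : ℕ) + (Fin.last n : ℕ)) = 1 :=
      Even.neg_one_pow ⟨n, by simp⟩
    rw [hev]; ring
  · intro b _ hb; rw [h, if_neg hb]; ring
  · intro hmem; exact absurd (Finset.mem_univ _) hmem

lemma AFF {n : ℕ} (Y : Matrix (Fin (n+1)) (Fin (n+1)) ℂ) (e d f : Fin (n+1) → ℂ) (p q r : ℂ) :
    (SW (Function.update e (Fin.last n) p) (Function.update d (Fin.last n) q)
        (Function.update f (Fin.last n) r) Y).det =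
      p * q * (SW (Function.update e (Fin.last n) 1) (Function.update d (Fin.last n) 1)
        (Function.update f (Fin.last n) 0) Y).det
      + r * (SW (Function.update e (Fin.last n) 0) (Function.update d (Fin.last n) 0)
        (Function.update f (Fin.last n) 1) Y).det := by
  set l : Fin (n+1) := Fin.last n with hldef
  have step1 : SW (Function.update e l p) (Function.update d l q) (Function.update f l r) Y =
      Matrix.updateRow (SW (Function.update e l 1) (Function.update d l q)
        (Function.update f l 0) Y) l
        (p • ((SW (Function.update e l 1) (Function.update d l q) (Function.update f l 0) Y) l)
          + r • (Pi.single l 1 : Fin (n+1) → ℂ)) := by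
    ext i j
    simp only [SW_apply, Matrix.updateRow_apply, Pi.add_apply, Pi.smul_apply, smul_eq_mul,
      Pi.single_apply, Function.update_apply]
    split_ifs <;> first | ring1 | (subst_vars; ring1) | (exfalso; subst_vars; simp_all)
  have step2 : (SW (Function.update e l 1) (Function.update d l q)
      (Function.update f l 0) Y).det =
      q * (SW (Function.update e l 1) (Function.update d l 1)
        (Function.update f l 0) Y).det := by
    have hcol : SW (Function.update e l 1) (Function.update d l q) (Function.update f l 0) Y =
        Matrix.updateCol (SW (Function.update e l 1) (Function.update d l 1)
          (Function.update f l 0) Y) l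
          (q • (fun i => (SW (Function.update e l 1) (Function.update d l 1)
            (Function.update f l 0) Y) i l)) := by
      ext i j
      simp only [SW_apply, Matrix.updateCol_apply, Pi.smul_apply, smul_eq_mul,
        Function.update_apply]
      split_ifs <;> first | ring1 | (subst_vars; ring1) | (exfalso; subst_vars; simp_all)
    rw [hcol, Matrix.det_updateCol_smul, Matrix.updateCol_eq_self]
  have step3 : (Matrix.updateRow (SW (Function.update e l 1) (Function.update d l q)
      (Function.update f l 0) Y) l (Pi.single l 1 : Fin (n+1) → ℂ)).det =
      (SW (Function.update e l 0) (Function.update d l 0)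
        (Function.update f l 1) Y).det := by
    rw [det_triv_last _ (by intro j; rw [Matrix.updateRow_self, Pi.single_apply])]
    rw [det_triv_last (SW (Function.update e l 0) (Function.update d l 0)
        (Function.update f l 1) Y) (by
      intro j
      simp only [SW_apply, Function.update_apply]
      split_ifs <;> first | ring1 | (subst_vars; ring1) | (exfalso; subst_vars; simp_all))]
    congr 1
    ext i j
    have hine : Fin.castSucc i ≠ l := (Fin.castSucc_lt_last i).ne
    have hjne : Fin.castSucc j ≠ l := (Fin.castSucc_lt_last j).ne
    simp only [Matrix.submatrix_apply, Matrix.updateRow_apply, if_neg hine, SW_apply,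
      Function.update_apply, if_neg hjne]
  rw [step1, Matrix.det_updateRow_add, Matrix.det_updateRow_smul, Matrix.det_updateRow_smul,
    Matrix.updateRow_eq_self, step2, step3]
  ring

lemma SW_transpose {m : ℕ} (e d f : Fin m → ℂ) (M : Matrix (Fin m) (Fin m) ℂ) :
    (SW e d f M)ᵀ = SW d e f Mᵀ := by
  simp only [SW, Matrix.transpose_add, Matrix.transpose_mul, Matrix.diagonal_transpose,
    Matrix.mul_assoc]

lemma SuppIn.transpose {m : ℕ} {p : ℕ → Prop} {M : Matrix (Fin m) (Fin m) ℂ}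
    (hM : SuppIn p M) : SuppIn p Mᵀ := by
  intro i j hij
  rw [Matrix.transpose_apply, hM j i (fun hp => hij ⟨hp.2, hp.1⟩)]
  by_cases h : i = j
  · rw [if_pos h.symm, if_pos h]
  · rw [if_neg (fun hh => h hh.symm), if_neg h]

lemma B2 {n : ℕ} (N g : Matrix (Fin (n+2)) (Fin (n+2)) ℂ)
    (hN : SuppIn (fun x => x < n+1) N)
    (hg : SuppIn (fun x => x = n ∨ x = n+1) g)
    (e d f : Fin (n+2) → ℂ) :
    (SW e d f (g * N)).det =
      (e (Fin.last (n+1)) * g (Fin.last (n+1)) (Fin.last (n+1)) * d (Fin.last (n+1))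
          + f (Fin.last (n+1))) *
        (SW (Function.update (e ∘ Fin.castSucc) (Fin.last n)
              (g (Fin.castSucc (Fin.last n)) (Fin.castSucc (Fin.last n))
                * e (Fin.castSucc (Fin.last n))))
            (d ∘ Fin.castSucc) (f ∘ Fin.castSucc)
            (N.submatrix Fin.castSucc Fin.castSucc)).det
      - e (Fin.castSucc (Fin.last n)) * g (Fin.castSucc (Fin.last n)) (Fin.last (n+1))
          * d (Fin.last (n+1)) *
        (SW (Function.update (e ∘ Fin.castSucc) (Fin.last n)
              (g (Fin.last (n+1)) (Fin.castSucc (Fin.last n)) * e (Fin.last (n+1))))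
            (d ∘ Fin.castSucc) (Function.update (f ∘ Fin.castSucc) (Fin.last n) 0)
            (N.submatrix Fin.castSucc Fin.castSucc)).det := by
  rw [← Matrix.det_transpose (SW e d f (g * N)), SW_transpose, Matrix.transpose_mul]
  rw [B1 Nᵀ gᵀ hN.transpose hg.transpose d e f]
  rw [show (Nᵀ).submatrix Fin.castSucc Fin.castSucc = (N.submatrix Fin.castSucc Fin.castSucc)ᵀ
    from rfl]
  rw [← SW_transpose, ← SW_transpose, Matrix.det_transpose, Matrix.det_transpose]
  simp only [Matrix.transpose_apply]
  ring

lemma submatrix_mul_of_triv {n : ℕ} (P Q : Matrix (Fin (n+1)) (Fin (n+1)) ℂ)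
    (hQ : ∀ j : Fin n, Q (Fin.last n) (Fin.castSucc j) = 0) :
    (P * Q).submatrix Fin.castSucc Fin.castSucc =
      P.submatrix Fin.castSucc Fin.castSucc * Q.submatrix Fin.castSucc Fin.castSucc := by
  ext i j
  rw [Matrix.submatrix_apply, Matrix.mul_apply, Matrix.mul_apply]
  rw [Fin.sum_univ_castSucc]
  simp [hQ j]

lemma SuppIn.submatrix {m : ℕ} {p : ℕ → Prop} {M : Matrix (Fin (m+1)) (Fin (m+1)) ℂ}
    (hM : SuppIn p M) : SuppIn p (M.submatrix Fin.castSucc Fin.castSucc) := by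
  intro i j hij
  rw [Matrix.submatrix_apply, hM _ _ (by
    rw [show ((Fin.castSucc i : Fin (m+1)) : ℕ) = (i : ℕ) from rfl,
      show ((Fin.castSucc j : Fin (m+1)) : ℕ) = (j : ℕ) from rfl]
    exact hij)]
  by_cases h : i = j
  · rw [if_pos (by rw [h]), if_pos h]
  · rw [if_neg (fun hh => h (Fin.castSucc_inj.mp hh)), if_neg h]

lemma SRED {n : ℕ} (X h : Matrix (Fin (n+2)) (Fin (n+2)) ℂ)
    (hX : SuppIn (fun x => x < n+1) X)
    (hh : SuppIn (fun x => x = n ∨ x = n+1) h)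
    (e d f : Fin (n+2) → ℂ) :
    (SW e d f (X * h)).det =
      (e (Fin.last (n+1)) * h (Fin.last (n+1)) (Fin.last (n+1)) * d (Fin.last (n+1))
          + f (Fin.last (n+1))) *
        (e (Fin.castSucc (Fin.last n)) * (h (Fin.castSucc (Fin.last n)) (Fin.castSucc (Fin.last n))
            * d (Fin.castSucc (Fin.last n))) *
          (SW (Function.update (e ∘ Fin.castSucc) (Fin.last n) 1)
            (Function.update (d ∘ Fin.castSucc) (Fin.last n) 1)
            (Function.update (f ∘ Fin.castSucc) (Fin.last n) 0)
            (X.submatrix Fin.castSucc Fin.castSucc)).det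
         + f (Fin.castSucc (Fin.last n)) *
          (SW (Function.update (e ∘ Fin.castSucc) (Fin.last n) 0)
            (Function.update (d ∘ Fin.castSucc) (Fin.last n) 0)
            (Function.update (f ∘ Fin.castSucc) (Fin.last n) 1)
            (X.submatrix Fin.castSucc Fin.castSucc)).det)
      - e (Fin.last (n+1)) * h (Fin.last (n+1)) (Fin.castSucc (Fin.last n))
          * d (Fin.castSucc (Fin.last n)) *
        (e (Fin.castSucc (Fin.last n)) * (h (Fin.castSucc (Fin.last n)) (Fin.last (n+1))
            * d (Fin.last (n+1))) *
          (SW (Function.update (e ∘ Fin.castSucc) (Fin.last n) 1)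
            (Function.update (d ∘ Fin.castSucc) (Fin.last n) 1)
            (Function.update (f ∘ Fin.castSucc) (Fin.last n) 0)
            (X.submatrix Fin.castSucc Fin.castSucc)).det) := by
  rw [B1 X h hX hh e d f]
  have he : Function.update (e ∘ Fin.castSucc) (Fin.last n) (e (Fin.castSucc (Fin.last n)))
      = e ∘ Fin.castSucc := Function.update_eq_self _ _
  have hf : Function.update (f ∘ Fin.castSucc) (Fin.last n) (f (Fin.castSucc (Fin.last n)))
      = f ∘ Fin.castSucc := Function.update_eq_self _ _
  have h1 := AFF (X.submatrix Fin.castSucc Fin.castSucc) (e ∘ Fin.castSucc) (d ∘ Fin.castSucc)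
      (f ∘ Fin.castSucc) (e (Fin.castSucc (Fin.last n)))
      (h (Fin.castSucc (Fin.last n)) (Fin.castSucc (Fin.last n)) * d (Fin.castSucc (Fin.last n)))
      (f (Fin.castSucc (Fin.last n)))
  rw [he, hf] at h1
  have h2 := AFF (X.submatrix Fin.castSucc Fin.castSucc) (e ∘ Fin.castSucc) (d ∘ Fin.castSucc)
      (f ∘ Fin.castSucc) (e (Fin.castSucc (Fin.last n)))
      (h (Fin.castSucc (Fin.last n)) (Fin.last (n+1)) * d (Fin.last (n+1))) 0
  rw [he] at h2
  rw [h1, h2]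
  ring

lemma update_comp_castSucc {k : ℕ} (u : Fin (k+2) → ℂ) (v : ℂ) :
    (Function.update u (Fin.last (k+1)) v) ∘ (Fin.castSucc : Fin (k+1) → Fin (k+2))
      = u ∘ Fin.castSucc := by
  funext j
  simp only [Function.comp_apply]
  exact Function.update_of_ne ((Fin.castSucc_lt_last j).ne) _ _

lemma update_castSucc_apply {k : ℕ} (u : Fin (k+2) → ℂ) (v : ℂ) (j : Fin (k+1)) :
    Function.update u (Fin.last (k+1)) v (Fin.castSucc j) = u (Fin.castSucc j) :=
  Function.update_of_ne ((Fin.castSucc_lt_last j).ne) _ _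

/-- the cross-case identity: `det (SW e d f (X*h*g)) = det (SW e d f (X*g*h))` for
adjacent-block letters `h` (block n) and `g` (block n+1), `X` supported below `n+1`. -/
lemma cross {n : ℕ} (X h g : Matrix (Fin (n+3)) (Fin (n+3)) ℂ)
    (hX : SuppIn (fun x => x < n+1) X)
    (hh : SuppIn (fun x => x = n ∨ x = n+1) h)
    (hgg : SuppIn (fun x => x = n+1 ∨ x = n+2) g)
    (e d f : Fin (n+3) → ℂ) :
    (SW e d f (X * h * g)).det = (SW e d f (X * g * h)).det := by
  have hXh : SuppIn (fun x => x < n+2) (X * h) :=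
    (hX.mono (by intro x hx; omega)).mul
      (hh.mono (by intro x hx; rcases hx with h1 | h1 <;> omega))
  have hX' : SuppIn (fun x => x < n+1) (X.submatrix Fin.castSucc Fin.castSucc) := hX.submatrix
  have hh' : SuppIn (fun x => x = n ∨ x = n+1) (h.submatrix Fin.castSucc Fin.castSucc) :=
    hh.submatrix
  have hsub : (X * h).submatrix Fin.castSucc Fin.castSucc =
      X.submatrix Fin.castSucc Fin.castSucc * h.submatrix Fin.castSucc Fin.castSucc := by
    refine submatrix_mul_of_triv X h (fun j => ?_)
    rw [hh _ _ (by
      intro hp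
      rcases hp.1 with h1 | h1 <;> simp [Fin.val_last] at h1 <;> omega)]
    rw [if_neg (Fin.castSucc_lt_last j).ne']
  have hcomm : X * g = g * X := SuppIn.commute (by intro x; rintro ⟨h1, h2 | h2⟩ <;> omega) hX hgg
  have hassoc : X * g * h = g * (X * h) := by rw [hcomm, Matrix.mul_assoc]
  rw [hassoc]
  rw [B1 (X * h) g hXh hgg e d f, B2 (X * h) g hXh hgg e d f]
  rw [hsub]
  rw [SRED _ _ hX' hh', SRED _ _ hX' hh', SRED _ _ hX' hh', SRED _ _ hX' hh']
  simp only [update_comp_castSucc, update_castSucc_apply, Function.update_self,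
    Function.comp_apply, Matrix.submatrix_apply]
  ring

/-! ### words of block letters -/

abbrev Word (m : ℕ) := List (ℕ × Matrix (Fin m) (Fin m) ℂ)

def mprod {m : ℕ} (L : Word m) : Matrix (Fin m) (Fin m) ℂ := (L.map Prod.snd).prod

lemma mprod_nil {m : ℕ} : mprod ([] : Word m) = 1 := rfl

lemma mprod_cons {m : ℕ} (a : ℕ × Matrix (Fin m) (Fin m) ℂ) (L : Word m) :
    mprod (a :: L) = a.2 * mprod L := by simp [mprod]

lemma mprod_append {m : ℕ} (L₁ L₂ : Word m) :
    mprod (L₁ ++ L₂) = mprod L₁ * mprod L₂ := by simp [mprod]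

def BlkP (m : ℕ) (p : ℕ × Matrix (Fin m) (Fin m) ℂ) : Prop :=
  p.1 + 1 < m ∧ SuppIn (fun x => x = p.1 ∨ x = p.1 + 1) p.2

lemma suppIn_mprod {m : ℕ} (p : ℕ → Prop) (L : Word m) (h : ∀ q ∈ L, SuppIn p q.2) :
    SuppIn p (mprod L) := by
  induction L with
  | nil => exact suppIn_one p
  | cons a l ih =>
      rw [mprod_cons]
      exact (h a (List.mem_cons_self)).mul (ih (fun q hq => h q (List.mem_cons_of_mem a hq)))

lemma mul_mprod_comm {m : ℕ} (g : Matrix (Fin m) (Fin m) ℂ) (L : Word m)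
    (h : ∀ q ∈ L, g * q.2 = q.2 * g) : g * mprod L = mprod L * g := by
  induction L with
  | nil => rw [mprod_nil, Matrix.one_mul, Matrix.mul_one]
  | cons a l ih =>
      rw [mprod_cons, ← Matrix.mul_assoc, h a (List.mem_cons_self), Matrix.mul_assoc,
        ih (fun q hq => h q (List.mem_cons_of_mem a hq)), ← Matrix.mul_assoc]

def restr {m : ℕ} (L : Word (m+1)) : Word m :=
  L.map (fun p => (p.1, p.2.submatrix Fin.castSucc Fin.castSucc))

lemma restr_map_fst {m : ℕ} (L : Word (m+1)) :
    (restr L).map Prod.fst = L.map Prod.fst := by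
  simp [restr]

lemma one_submatrix_castSucc {m : ℕ} :
    (1 : Matrix (Fin (m+1)) (Fin (m+1)) ℂ).submatrix Fin.castSucc Fin.castSucc = 1 := by
  ext i j
  rw [Matrix.submatrix_apply, Matrix.one_apply, Matrix.one_apply]
  by_cases h : i = j
  · rw [if_pos (by rw [h]), if_pos h]
  · rw [if_neg (fun hh => h (Fin.castSucc_inj.mp hh)), if_neg h]

lemma mprod_restr {m : ℕ} (L : Word (m+1)) (h : ∀ q ∈ L, SuppIn (fun x => x < m) q.2) :
    (mprod L).submatrix Fin.castSucc Fin.castSucc = mprod (restr L) := by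
  induction L with
  | nil => rw [mprod_nil, restr, List.map_nil, mprod_nil, one_submatrix_castSucc]
  | cons a l ih =>
      have hl : SuppIn (fun x => x < m) (mprod l) :=
        suppIn_mprod _ _ (fun q hq => h q (List.mem_cons_of_mem a hq))
      have hmr : mprod (restr (a :: l)) = a.2.submatrix Fin.castSucc Fin.castSucc
          * mprod (restr l) := by
        rw [restr, List.map_cons, mprod_cons]
        rfl
      rw [mprod_cons, hmr, ← ih (fun q hq => h q (List.mem_cons_of_mem a hq))]
      refine submatrix_mul_of_triv _ _ (fun j => ?_)
      rw [hl (Fin.last m) (Fin.castSucc j) (by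
        intro hp
        have : ((Fin.last m : Fin (m+1)) : ℕ) = m := Fin.val_last m
        omega)]
      rw [if_neg (Fin.castSucc_lt_last j).ne']

/-! ### the main induction -/

theorem key (m : ℕ) : ∀ (L₁ L₂ : Word (m+1)),
    (∀ p ∈ L₁, BlkP (m+1) p) → (L₁.map Prod.fst).Nodup → L₁.Perm L₂ →
    ∀ e d f : Fin (m+1) → ℂ,
      (SW e d f (mprod L₁)).det = (SW e d f (mprod L₂)).det := by
  induction m with
  | zero =>
      intro L₁ L₂ hB _ hP e d f
      have h1 : L₁ = [] := by
        cases L₁ with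
        | nil => rfl
        | cons a l => exact absurd (hB a (List.mem_cons_self)).1 (by omega)
      subst h1
      rw [List.perm_nil.mp hP.symm]
  | succ m IH =>
      intro L₁ L₂ hB hND hP e d f
      have hB₂ : ∀ p ∈ L₂, BlkP (m+2) p := fun p hp => hB p (hP.mem_iff.mpr hp)
      have hND₂ : (L₂.map Prod.fst).Nodup := ((hP.map Prod.fst).nodup_iff).mp hND
      -- the generic one-step reduction when no letter of index m occurs
      have red : ∀ W : Word (m+2), (∀ p ∈ W, SuppIn (fun x => x < m+1) p.2) →
          (SW e d f (mprod W)).det =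
            (e (Fin.last (m+1)) * d (Fin.last (m+1)) + f (Fin.last (m+1))) *
              (SW (e ∘ Fin.castSucc) (d ∘ Fin.castSucc) (f ∘ Fin.castSucc)
                (mprod (restr W))).det := by
        intro W hSW
        have hNW : SuppIn (fun x => x < m+1) (mprod W) := suppIn_mprod _ _ hSW
        have hB1 := B1 (mprod W) 1 hNW (suppIn_one _) e d f
        rw [Matrix.mul_one] at hB1
        rw [hB1, mprod_restr W hSW]
        rw [Matrix.one_apply_eq, Matrix.one_apply_eq,
          Matrix.one_apply_ne (show (Fin.last (m+1) : Fin (m+2)) ≠ Fin.castSucc (Fin.last m)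
            from (Fin.castSucc_lt_last (Fin.last m)).ne'),
          one_mul]
        rw [show Function.update (d ∘ Fin.castSucc) (Fin.last m)
            (d (Fin.castSucc (Fin.last m))) = d ∘ Fin.castSucc from Function.update_eq_self _ _]
        ring
      by_cases hm : ∃ p ∈ L₁, p.1 = m
      · -- some letter has index m
        obtain ⟨P₀, hP₀L, hP₀1⟩ := hm
        obtain ⟨T, hLT⟩ : ∃ T : Word (m+2), L₁.Perm (P₀ :: T) :=
          ⟨_, List.perm_cons_erase hP₀L⟩
        have hg : SuppIn (fun x => x = m ∨ x = m+1) P₀.2 := by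
          have := (hB P₀ hP₀L).2
          rwa [hP₀1] at this
        have hTgood : ∀ p ∈ T, BlkP (m+2) p :=
          fun p hp => hB p (hLT.symm.subset (List.mem_cons_of_mem _ hp))
        have hconsnd : ((P₀ :: T).map Prod.fst).Nodup := ((hLT.map Prod.fst).nodup_iff).mp hND
        rw [List.map_cons, List.nodup_cons] at hconsnd
        have hTnd : (T.map Prod.fst).Nodup := hconsnd.2
        have hTne : ∀ p ∈ T, p.1 ≠ m := by
          intro p hp hpm
          refine hconsnd.1 ?_
          rw [hP₀1]
          have h5 := List.mem_map_of_mem (f := Prod.fst) hp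
          rwa [hpm] at h5
        -- supports of index-≠-m letters
        have hsupp : ∀ p : ℕ × Matrix (Fin (m+2)) (Fin (m+2)) ℂ, BlkP (m+2) p → p.1 ≠ m →
            SuppIn (fun x => x < m+1) p.2 := by
          intro p hp hpm
          refine hp.2.mono ?_
          have := hp.1
          intro x hx
          rcases hx with h | h <;> omega
        -- restricted words are good
        have hres : ∀ W : Word (m+2), (∀ p ∈ W, BlkP (m+2) p) → (∀ p ∈ W, p.1 ≠ m) →
            ∀ p ∈ restr W, BlkP (m+1) p := by
          intro W h1 h2 p hp
          rw [restr, List.mem_map] at hp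
          obtain ⟨q, hq, rfl⟩ := hp
          exact ⟨by have := (h1 q hq).1; have := h2 q hq; omega, (h1 q hq).2.submatrix⟩
        -- VA: canonical value of  det (SW e d f (mprod W * P₀.2))  for W ~ T
        have VA : ∀ W : Word (m+2), (∀ p ∈ W, BlkP (m+2) p) → W.Perm T →
            (SW e d f (mprod W * P₀.2)).det = (SW e d f (mprod T * P₀.2)).det := by
          intro W hWgood hWT
          have hWne : ∀ p ∈ W, p.1 ≠ m := fun p hp => hTne p (hWT.subset hp)
          have hWsupp : ∀ p ∈ W, SuppIn (fun x => x < m+1) p.2 :=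
            fun p hp => hsupp p (hWgood p hp) (hWne p hp)
          have hTsupp : ∀ p ∈ T, SuppIn (fun x => x < m+1) p.2 :=
            fun p hp => hsupp p (hTgood p hp) (hTne p hp)
          have hWnd : (W.map Prod.fst).Nodup := ((hWT.map Prod.fst).nodup_iff).mpr hTnd
          rw [B1 (mprod W) P₀.2 (suppIn_mprod _ _ hWsupp) hg e d f,
            B1 (mprod T) P₀.2 (suppIn_mprod _ _ hTsupp) hg e d f,
            mprod_restr W hWsupp, mprod_restr T hTsupp]
          rw [IH (restr W) (restr T) (hres W hWgood hWne)
              (by rw [restr_map_fst]; exact hWnd) (hWT.map _) (e ∘ Fin.castSucc) _ _,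
            IH (restr W) (restr T) (hres W hWgood hWne)
              (by rw [restr_map_fst]; exact hWnd) (hWT.map _) (e ∘ Fin.castSucc) _ _]
        -- VB: canonical value of  det (SW e d f (P₀.2 * mprod W))  for W ~ T
        have VB : ∀ W : Word (m+2), (∀ p ∈ W, BlkP (m+2) p) → W.Perm T →
            (SW e d f (P₀.2 * mprod W)).det = (SW e d f (P₀.2 * mprod T)).det := by
          intro W hWgood hWT
          have hWne : ∀ p ∈ W, p.1 ≠ m := fun p hp => hTne p (hWT.subset hp)
          have hWsupp : ∀ p ∈ W, SuppIn (fun x => x < m+1) p.2 :=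
            fun p hp => hsupp p (hWgood p hp) (hWne p hp)
          have hTsupp : ∀ p ∈ T, SuppIn (fun x => x < m+1) p.2 :=
            fun p hp => hsupp p (hTgood p hp) (hTne p hp)
          have hWnd : (W.map Prod.fst).Nodup := ((hWT.map Prod.fst).nodup_iff).mpr hTnd
          rw [B2 (mprod W) P₀.2 (suppIn_mprod _ _ hWsupp) hg e d f,
            B2 (mprod T) P₀.2 (suppIn_mprod _ _ hTsupp) hg e d f,
            mprod_restr W hWsupp, mprod_restr T hTsupp]
          rw [IH (restr W) (restr T) (hres W hWgood hWne)
              (by rw [restr_map_fst]; exact hWnd) (hWT.map _) _ (d ∘ Fin.castSucc) _,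
            IH (restr W) (restr T) (hres W hWgood hWne)
              (by rw [restr_map_fst]; exact hWnd) (hWT.map _) _ (d ∘ Fin.castSucc) _]
        -- bridge between the two canonical values
        have bridge : (SW e d f (mprod T * P₀.2)).det = (SW e d f (P₀.2 * mprod T)).det := by
          by_cases hq : ∃ p ∈ T, p.1 + 1 = m
          · obtain ⟨Q, hQT, hQ1⟩ := hq
            obtain ⟨T2, hT2perm⟩ : ∃ T2 : Word (m+2), T.Perm (Q :: T2) :=
              ⟨_, List.perm_cons_erase hQT⟩
            have hT2good : ∀ p ∈ T2, BlkP (m+2) p :=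
              fun p hp => hTgood p (hT2perm.symm.subset (List.mem_cons_of_mem _ hp))
            have hT2nd : ((Q :: T2).map Prod.fst).Nodup :=
              ((hT2perm.map Prod.fst).nodup_iff).mp hTnd
            rw [List.map_cons, List.nodup_cons] at hT2nd
            have hT2neQ : ∀ p ∈ T2, p.1 ≠ Q.1 := by
              intro p hp hpq
              refine hT2nd.1 ?_
              have h5 := List.mem_map_of_mem (f := Prod.fst) hp
              rwa [hpq] at h5
            have hT2ne : ∀ p ∈ T2, p.1 ≠ m :=
              fun p hp => hTne p (hT2perm.symm.subset (List.mem_cons_of_mem _ hp))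
            -- m = Q.1 + 1
            obtain ⟨k, hk⟩ : ∃ k, m = k + 1 := ⟨Q.1, hQ1.symm⟩
            subst hk
            have hQ1' : Q.1 = k := by omega
            have hQblk : SuppIn (fun x => x = k ∨ x = k + 1) Q.2 := by
              have := (hTgood Q hQT).2
              rwa [hQ1'] at this
            have hgg : SuppIn (fun x => x = k + 1 ∨ x = k + 2) P₀.2 := hg
            have hX : SuppIn (fun x => x < k + 1) (mprod T2) := by
              refine suppIn_mprod _ _ (fun p hp => ?_)
              refine (hT2good p hp).2.mono ?_
              have h1 := (hT2good p hp).1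
              have h2 := hT2neQ p hp
              have h3 := hT2ne p hp
              intro x hx
              rcases hx with h | h <;> omega
            have hcomm : ∀ p ∈ T2, P₀.2 * p.2 = p.2 * P₀.2 := by
              intro p hp
              refine SuppIn.commute ?_ hgg (hT2good p hp).2
              intro x
              have h1 := (hT2good p hp).1
              have h2 := hT2neQ p hp
              have h3 := hT2ne p hp
              rintro ⟨h4 | h4, h5 | h5⟩ <;> omega
            have e1 : (SW e d f (mprod T * P₀.2)).det =
                (SW e d f (mprod T2 * Q.2 * P₀.2)).det := by
              have := VA (T2 ++ [Q]) (by
                intro p hp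
                rcases List.mem_append.mp hp with h | h
                · exact hT2good p h
                · rw [List.mem_singleton.mp h]; exact hTgood Q hQT)
                ((List.perm_append_singleton Q T2).trans hT2perm.symm)
              rw [← this, mprod_append, show mprod [Q] = Q.2 * 1 from rfl, Matrix.mul_one]
            have e2 : (SW e d f (P₀.2 * mprod T)).det =
                (SW e d f (P₀.2 * (mprod T2 * Q.2))).det := by
              have := VB (T2 ++ [Q]) (by
                intro p hp
                rcases List.mem_append.mp hp with h | h
                · exact hT2good p h
                · rw [List.mem_singleton.mp h]; exact hTgood Q hQT)
                ((List.perm_append_singleton Q T2).trans hT2perm.symm)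
              rw [← this, mprod_append, show mprod [Q] = Q.2 * 1 from rfl, Matrix.mul_one]
            rw [e1, e2]
            rw [cross (mprod T2) Q.2 P₀.2 hX hQblk hgg e d f]
            rw [← Matrix.mul_assoc, mul_mprod_comm P₀.2 T2 hcomm, Matrix.mul_assoc]
          · -- no letter of index m-1 : P₀.2 commutes with everything in T
            push_neg at hq
            have hcomm : ∀ p ∈ T, P₀.2 * p.2 = p.2 * P₀.2 := by
              intro p hp
              refine SuppIn.commute ?_ hg (hTgood p hp).2
              intro x
              have h1 := (hTgood p hp).1
              have h2 := hTne p hp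
              have h3 := hq p hp
              rintro ⟨h4 | h4, h5 | h5⟩ <;> omega
            rw [mul_mprod_comm P₀.2 T hcomm]
        -- canonical value of any word permutation-equivalent to P₀ :: T
        have PROP : ∀ L : Word (m+2), (∀ p ∈ L, BlkP (m+2) p) → (L.map Prod.fst).Nodup →
            L.Perm (P₀ :: T) → (SW e d f (mprod L)).det = (SW e d f (mprod T * P₀.2)).det := by
          intro L hLgood hLnd hLperm
          have hPinL : P₀ ∈ L := hLperm.mem_iff.mpr (List.mem_cons_self)
          obtain ⟨A', B', rfl⟩ := List.append_of_mem hPinL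
          have hrest : (A' ++ B').Perm T :=
            (List.perm_middle.symm.trans hLperm).cons_inv
          have hrgood : ∀ p ∈ A' ++ B', BlkP (m+2) p := by
            intro p hp
            rcases List.mem_append.mp hp with h | h
            · exact hLgood p (List.mem_append.mpr (Or.inl h))
            · exact hLgood p (List.mem_append.mpr (Or.inr (List.mem_cons_of_mem _ h)))
          have hrne : ∀ p ∈ A' ++ B', p.1 ≠ m := fun p hp => hTne p (hrest.subset hp)
          by_cases hcB : ∃ p ∈ B', p.1 + 1 = m
          · -- move P₀ to the front
            obtain ⟨Q, hQB, hQ1⟩ := hcB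
            have hndfst : ((A' ++ P₀ :: B').map Prod.fst).Nodup := hLnd
            rw [List.map_append, List.nodup_append] at hndfst
            have hA'comm : ∀ p ∈ A', P₀.2 * p.2 = p.2 * P₀.2 := by
              intro p hp
              refine SuppIn.commute ?_ hg (hLgood p (List.mem_append.mpr (Or.inl hp))).2
              intro x
              have h1 := (hLgood p (List.mem_append.mpr (Or.inl hp))).1
              have h2 := hrne p (List.mem_append.mpr (Or.inl hp))
              have h3 : p.1 + 1 ≠ m := by
                intro hpq
                refine hndfst.2.2 p.1 (List.mem_map_of_mem (f := Prod.fst) hp) p.1 ?_ rfl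
                rw [List.map_cons]
                refine List.mem_cons_of_mem _ ?_
                have : p.1 = Q.1 := by omega
                rw [this]
                exact List.mem_map_of_mem (f := Prod.fst) hQB
              rintro ⟨h4 | h4, h5 | h5⟩ <;> omega
            have hsplit : mprod (A' ++ P₀ :: B') = P₀.2 * mprod (A' ++ B') := by
              rw [mprod_append, mprod_cons, mprod_append, ← Matrix.mul_assoc,
                ← mul_mprod_comm P₀.2 A' hA'comm, Matrix.mul_assoc]
            rw [hsplit, VB (A' ++ B') hrgood hrest, ← bridge]
          · push_neg at hcB
            have hB'comm : ∀ p ∈ B', P₀.2 * p.2 = p.2 * P₀.2 := by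
              intro p hp
              refine SuppIn.commute ?_ hg
                (hLgood p (List.mem_append.mpr (Or.inr (List.mem_cons_of_mem _ hp)))).2
              intro x
              have h1 := (hLgood p (List.mem_append.mpr (Or.inr (List.mem_cons_of_mem _ hp)))).1
              have h2 := hrne p (List.mem_append.mpr (Or.inr hp))
              have h3 := hcB p hp
              rintro ⟨h4 | h4, h5 | h5⟩ <;> omega
            have hsplit : mprod (A' ++ P₀ :: B') = mprod (A' ++ B') * P₀.2 := by
              rw [mprod_append, mprod_cons, mul_mprod_comm P₀.2 B' hB'comm, mprod_append,
                Matrix.mul_assoc]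
            rw [hsplit, VA (A' ++ B') hrgood hrest]
        rw [PROP L₁ hB hND hLT, PROP L₂ hB₂ hND₂ (hP.symm.trans hLT)]
      · -- no letter of index m : everything restricts
        push_neg at hm
        have hm₂ : ∀ p ∈ L₂, p.1 ≠ m := fun p hp => hm p (hP.mem_iff.mpr hp)
        have hS : ∀ p ∈ L₁, SuppIn (fun x => x < m+1) p.2 := by
          intro p hp
          refine (hB p hp).2.mono ?_
          have h1 := (hB p hp).1
          have h2 := hm p hp
          intro x hx
          rcases hx with h | h <;> omega
        have hS₂ : ∀ p ∈ L₂, SuppIn (fun x => x < m+1) p.2 := by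
          intro p hp
          refine (hB₂ p hp).2.mono ?_
          have h1 := (hB₂ p hp).1
          have h2 := hm₂ p hp
          intro x hx
          rcases hx with h | h <;> omega
        rw [red L₁ hS, red L₂ hS₂]
        congr 1
        refine IH (restr L₁) (restr L₂) ?_ ?_ (hP.map _) _ _ _
        · intro p hp
          rw [restr, List.mem_map] at hp
          obtain ⟨q, hq, rfl⟩ := hp
          exact ⟨by have := (hB q hq).1; have := hm q hq; omega, (hB q hq).2.submatrix⟩
        · rw [restr_map_fst]; exact hND

/-! ### from `Mperm` to words -/

variable {n : ℕ}

def Lw (G : Fin n → Matrix (Fin (n + 1)) (Fin (n + 1)) ℂ) (π : Equiv.Perm (Fin n)) :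
    Word (n + 1) :=
  List.ofFn (fun i : Fin n => (((π i : Fin n) : ℕ), G (π i)))

lemma mprod_Lw (G : Fin n → Matrix (Fin (n + 1)) (Fin (n + 1)) ℂ) (π : Equiv.Perm (Fin n)) :
    mprod (Lw G π) = Mperm G π := by
  rw [mprod, Lw, List.map_ofFn, Mperm]
  rfl

lemma Lw_good (G : Fin n → Matrix (Fin (n + 1)) (Fin (n + 1)) ℂ)
    (hG : ∀ k : Fin n, IsGMat k (G k)) (π : Equiv.Perm (Fin n)) :
    ∀ p ∈ Lw G π, BlkP (n + 1) p := by
  intro p hp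
  rw [Lw, List.mem_ofFn] at hp
  obtain ⟨i, rfl⟩ := hp
  refine ⟨Nat.succ_lt_succ (π i).isLt, ?_⟩
  intro a b hab
  refine hG (π i) a b ?_
  rintro ⟨h1, h2⟩
  refine hab ⟨?_, ?_⟩
  · rcases h1 with h | h
    · exact Or.inl (by rw [h]; rfl)
    · exact Or.inr (by rw [h]; exact Fin.val_succ (π i))
  · rcases h2 with h | h
    · exact Or.inl (by rw [h]; rfl)
    · exact Or.inr (by rw [h]; exact Fin.val_succ (π i))

lemma Lw_nodup (G : Fin n → Matrix (Fin (n + 1)) (Fin (n + 1)) ℂ) (π : Equiv.Perm (Fin n)) :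
    ((Lw G π).map Prod.fst).Nodup := by
  rw [Lw, List.map_ofFn]
  rw [List.nodup_ofFn]
  intro a b hab
  have : ((π a : Fin n) : ℕ) = ((π b : Fin n) : ℕ) := hab
  exact π.injective (Fin.ext this)

lemma Lw_perm (G : Fin n → Matrix (Fin (n + 1)) (Fin (n + 1)) ℂ) (π₁ π₂ : Equiv.Perm (Fin n)) :
    (Lw G π₁).Perm (Lw G π₂) := by
  have base : ∀ π : Equiv.Perm (Fin n),
      (Lw G π).Perm (List.ofFn (fun i : Fin n => ((i : ℕ), G i))) := by
    intro π
    rw [Lw, List.ofFn_eq_map, List.ofFn_eq_map]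
    have hmm : List.map (fun i : Fin n => (((π i : Fin n) : ℕ), G (π i))) (List.finRange n)
        = List.map (fun i : Fin n => ((i : ℕ), G i)) ((List.finRange n).map π) := by
      rw [List.map_map]
      rfl
    rw [hmm]
    refine List.Perm.map _ ?_
    refine List.perm_of_nodup_nodup_toFinset_eq ?_ ?_ ?_
    · exact (List.nodup_finRange n).map π.injective
    · exact List.nodup_finRange n
    · ext a
      simp only [List.mem_toFinset, List.mem_map, List.mem_finRange, true_and]
      exact ⟨fun _ => trivial, fun _ => ⟨π.symm a, by simp⟩⟩
  exact (base π₁).trans (base π₂).symm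

lemma pencil_indep (G : Fin n → Matrix (Fin (n + 1)) (Fin (n + 1)) ℂ)
    (hG : ∀ k : Fin n, IsGMat k (G k)) (π₁ π₂ : Equiv.Perm (Fin n))
    (e d f : Fin (n + 1) → ℂ) :
    (SW e d f (Mperm G π₁)).det = (SW e d f (Mperm G π₂)).det := by
  rw [← mprod_Lw G π₁, ← mprod_Lw G π₂]
  exact key n (Lw G π₁) (Lw G π₂) (Lw_good G hG π₁) (Lw_nodup G π₁) (Lw_perm G π₁ π₂) e d f

end Stmt19Aux

open Stmt19Aux in
/-- Theorem `thmRAMPD`: the polynomial λ ↦ det((A·M_π + C) − λ(B·M_π + D))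
does not depend on the permutation π; in particular the generalized eigenvalues of the
pencil (A·M_π + C, B·M_π + D) do not depend on π, and if B·M_π + D is invertible,
the eigenvalues of the RAMPD matrix R = (A·M_π + C)(B·M_π + D)⁻¹ do not depend on π. -/
theorem stmt19 (n : ℕ) (G : Fin n → Matrix (Fin (n + 1)) (Fin (n + 1)) ℂ)
    (hG : ∀ k : Fin n, IsGMat k (G k))
    (A B C D : Matrix (Fin (n + 1)) (Fin (n + 1)) ℂ)
    (hA : A.IsDiag) (hB : B.IsDiag) (hC : C.IsDiag) (hD : D.IsDiag)
    (π₁ π₂ : Equiv.Perm (Fin n)) :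
    (∀ lam : ℂ,
      ((A * Mperm G π₁ + C) - lam • (B * Mperm G π₁ + D)).det =
        ((A * Mperm G π₂ + C) - lam • (B * Mperm G π₂ + D)).det) ∧
    (IsUnit (B * Mperm G π₁ + D).det → IsUnit (B * Mperm G π₂ + D).det →
      ∀ lam : ℂ,
        (((A * Mperm G π₁ + C) * (B * Mperm G π₁ + D)⁻¹ - lam • 1).det = 0 ↔
          ((A * Mperm G π₂ + C) * (B * Mperm G π₂ + D)⁻¹ - lam • 1).det = 0)) := by
  have part1 : ∀ lam : ℂ,
      ((A * Mperm G π₁ + C) - lam • (B * Mperm G π₁ + D)).det =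
        ((A * Mperm G π₂ + C) - lam • (B * Mperm G π₂ + D)).det := by
    intro lam
    have hrw : ∀ π : Equiv.Perm (Fin n),
        (A * Mperm G π + C) - lam • (B * Mperm G π + D)
          = SW (fun i => A i i - lam * B i i) (fun _ => 1) (fun i => C i i - lam * D i i)
              (Mperm G π) := by
      intro π
      rw [SW, Matrix.diagonal_one, Matrix.mul_one]
      have h1 : Matrix.diagonal (fun i => A i i - lam * B i i) = A - lam • B := by
        rw [show (fun i => A i i - lam * B i i) = fun i => A.diag i - (lam • B.diag) i from rfl]
        rw [← Matrix.diagonal_sub, Matrix.diagonal_smul, hA.diagonal_diag, hB.diagonal_diag]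
      have h2 : Matrix.diagonal (fun i => C i i - lam * D i i) = C - lam • D := by
        rw [show (fun i => C i i - lam * D i i) = fun i => C.diag i - (lam • D.diag) i from rfl]
        rw [← Matrix.diagonal_sub, Matrix.diagonal_smul, hC.diagonal_diag, hD.diagonal_diag]
      rw [h1, h2, Matrix.sub_mul, Matrix.smul_mul, smul_add]
      abel
    rw [hrw π₁, hrw π₂]
    exact pencil_indep G hG π₁ π₂ _ _ _
  refine ⟨part1, ?_⟩
  intro hU1 hU2 lam
  have hfac : ∀ M : Matrix (Fin (n + 1)) (Fin (n + 1)) ℂ, IsUnit (B * M + D).det →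
      (A * M + C) * (B * M + D)⁻¹ - lam • 1
        = ((A * M + C) - lam • (B * M + D)) * (B * M + D)⁻¹ := by
    intro M hU
    rw [Matrix.sub_mul, Matrix.smul_mul, Matrix.mul_nonsing_inv _ hU]
  rw [hfac _ hU1, hfac _ hU2, Matrix.det_mul, Matrix.det_mul]
  have hd1 : ((B * Mperm G π₁ + D)⁻¹).det ≠ 0 := by
    rw [Matrix.det_nonsing_inv, Ring.inverse_eq_inv']
    exact inv_ne_zero hU1.ne_zero
  have hd2 : ((B * Mperm G π₂ + D)⁻¹).det ≠ 0 := by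
    rw [Matrix.det_nonsing_inv, Ring.inverse_eq_inv']
    exact inv_ne_zero hU2.ne_zero
  rw [part1 lam, mul_eq_zero, mul_eq_zero]
  constructor
  · rintro (h | h)
    · exact Or.inl h
    · exact absurd h hd1
  · rintro (h | h)
    · exact Or.inl h
    · exact absurd h hd2
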